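/- Equip ℂ³ with the sup norm and let W = {(x, y, z) ∈ ℂ³ : z = x + y} = span{(1,0,1), (0,1,1)}. Then there is no continuous linear projection of norm 1 from ℂ³ onto W: every linear map p : ℂ³ → ℂ³ with p ∘ p = p and range p = W satisfies ‖p‖ > 1 (for the operator norm induced by the sup norm). -/

import Mathlib

lemma aux_zero (a : ℂ) (h1 : ‖1 + a‖ ≤ 1) (h2 : ‖1 - a‖ ≤ 1) : a = 0 := by
  have n1 : Complex.normSq (1 + a) ≤ 1 := by
    rw [← Complex.sq_norm]
    have : ‖1 + a‖ ≤ 1 := h1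
    nlinarith [norm_nonneg (1 + a)]
  have n2 : Complex.normSq (1 - a) ≤ 1 := by
    rw [← Complex.sq_norm]
    have : ‖1 - a‖ ≤ 1 := h2
    nlinarith [norm_nonneg (1 - a)]
  have e1 : Complex.normSq (1 + a) = 1 + 2 * a.re + a.re ^ 2 + a.im ^ 2 := by
    simp [Complex.normSq_apply]; ring
  have e2 : Complex.normSq (1 - a) = 1 - 2 * a.re + a.re ^ 2 + a.im ^ 2 := by
    simp [Complex.normSq_apply]; ring
  have hre : a.re = 0 := by nlinarith
  have him : a.im = 0 := by nlinarith
  exact Complex.ext hre him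

/-- Equip `ℂ³` (as `Fin 3 → ℂ` with the sup norm) and let
`W = {(x, y, z) : z = x + y}`. Then every (continuous) linear projection `p` of `ℂ³`
with range `W` satisfies `‖p‖ > 1`: there is no norm-one linear projection onto `W`. -/
theorem stmt5
    (W : Set (Fin 3 → ℂ)) (hW : W = {v : Fin 3 → ℂ | v 2 = v 0 + v 1})
    (p : (Fin 3 → ℂ) →L[ℂ] (Fin 3 → ℂ))
    (hproj : ∀ v, p (p v) = p v) (hrange : Set.range p = W) :
    1 < ‖p‖ := by
  by_contra hle
  push_neg at hle
  -- coordinatewise bound from ‖p‖ ≤ 1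
  have hb : ∀ v : Fin 3 → ℂ, ‖v‖ ≤ 1 → ∀ i, ‖p v i‖ ≤ 1 := by
    intro v hv i
    calc ‖p v i‖ ≤ ‖p v‖ := norm_le_pi_norm _ i
      _ ≤ ‖p‖ * ‖v‖ := p.le_opNorm v
      _ ≤ 1 := by nlinarith [norm_nonneg v, norm_nonneg (p : (Fin 3 → ℂ) →L[ℂ] (Fin 3 → ℂ))]
  -- p fixes W
  have hfix : ∀ w : Fin 3 → ℂ, w 2 = w 0 + w 1 → p w = w := by
    intro w hw
    have hwW : w ∈ Set.range p := by rw [hrange, hW]; exact hw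
    obtain ⟨x, hx⟩ := hwW
    rw [← hx, hproj]
  have hmem : ∀ v, p v 2 = p v 0 + p v 1 := by
    intro v
    have : p v ∈ W := hrange ▸ Set.mem_range_self v
    rw [hW] at this; exact this
  set e : Fin 3 → ℂ := ![0, 0, -1] with he
  set q := p e with hq
  have hq2 : q 2 = q 0 + q 1 := hmem e
  -- images of test vectors
  have h1 : p ![1, 1, 1] = ![1, 1, 2] + q := by
    have hv : (![1, 1, 1] : Fin 3 → ℂ) = ![1, 1, 2] + e := by
      funext i; fin_cases i <;> simp [he] <;> norm_num
    rw [hv, map_add, hfix ![1, 1, 2] (by simp; norm_num)]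
  have h2 : p ![1, -1, 1] = ![1, -1, 0] - q := by
    have hv : (![1, -1, 1] : Fin 3 → ℂ) = ![1, -1, 0] - e := by
      funext i; fin_cases i <;> simp [he] <;> norm_num
    rw [hv, map_sub, hfix ![1, -1, 0] (by simp)]
  have h3 : p ![-1, 1, 1] = ![-1, 1, 0] - q := by
    have hv : (![-1, 1, 1] : Fin 3 → ℂ) = ![-1, 1, 0] - e := by
      funext i; fin_cases i <;> simp [he] <;> norm_num
    rw [hv, map_sub, hfix ![-1, 1, 0] (by simp)]
  -- norms of test vectors
  have hn1 : ‖(![1, 1, 1] : Fin 3 → ℂ)‖ ≤ 1 := by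
    rw [pi_norm_le_iff_of_nonneg zero_le_one]
    intro i; fin_cases i <;> simp
  have hn2 : ‖(![1, -1, 1] : Fin 3 → ℂ)‖ ≤ 1 := by
    rw [pi_norm_le_iff_of_nonneg zero_le_one]
    intro i; fin_cases i <;> simp
  have hn3 : ‖(![-1, 1, 1] : Fin 3 → ℂ)‖ ≤ 1 := by
    rw [pi_norm_le_iff_of_nonneg zero_le_one]
    intro i; fin_cases i <;> simp
  -- coordinate constraints
  have hA : ‖1 + q 0‖ ≤ 1 := by
    have := hb _ hn1 0; rw [h1] at this; simpa using this
  have hB : ‖1 + q 1‖ ≤ 1 := by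
    have := hb _ hn1 1; rw [h1] at this; simpa using this
  have hC : ‖2 + q 2‖ ≤ 1 := by
    have := hb _ hn1 2; rw [h1] at this; simpa using this
  have hA' : ‖1 - q 0‖ ≤ 1 := by
    have := hb _ hn2 0; rw [h2] at this; simpa using this
  have hB' : ‖1 - q 1‖ ≤ 1 := by
    have := hb _ hn3 1; rw [h3] at this; simpa using this
  have h0 : q 0 = 0 := aux_zero _ hA hA'
  have h1' : q 1 = 0 := aux_zero _ hB hB'
  have : q 2 = 0 := by rw [hq2, h0, h1', add_zero]
  rw [this, add_zero] at hC
  norm_num at hC
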